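/- Let Σ be a finite alphabet, L ⊆ Σ*, and let c be a letter with c ∉ Σ. Let L' = c(Lc)* = {c u1 c u2 c ⋯ u_m c : m ≥ 0, u1,…,u_m ∈ L}, a language over Σ ∪ {c}. Then (Σ ∪ {c})* ⊆ F(L') if and only if L = Σ*. -/

import Mathlib

/-- Kleene star of a language, as a set of lists. -/
def LangStar {α : Type*} (K : Set (List α)) : Set (List α) :=
  {w | ∃ ws : List (List α), (∀ u ∈ ws, u ∈ K) ∧ w = ws.flatten}

/-- Concatenation of two languages. -/
def LangConc {α : Type*} (K L : Set (List α)) : Set (List α) :=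
  {w | ∃ u ∈ K, ∃ v ∈ L, w = u ++ v}

/-- Concatenation `L 0 · L 1 ⋯ L (k-1)` of a finite family of languages. -/
def LangConcFn {α : Type*} {k : ℕ} (Ls : Fin k → Set (List α)) : Set (List α) :=
  {w | ∃ ws : Fin k → List α, (∀ j, ws j ∈ Ls j) ∧ w = (List.ofFn ws).flatten}

/-- `w ^ x` : the `x`-fold repetition of the word `w`. -/
def wpow {α : Type*} (w : List α) (x : ℕ) : List α := (List.replicate x w).flatten

/-- The set of factors `F(L) = {w : L ∩ Σ*wΣ* ≠ ∅}`. -/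
def Factors {α : Type*} (L : Set (List α)) : Set (List α) :=
  {w | ∃ u ∈ L, ∃ x y : List α, u = x ++ w ++ y}

/-- The set of factor tuples
`F_n(L) = {(w1,…,wn) : Σ*w1Σ*w2Σ*⋯wnΣ* ∩ L ≠ ∅}`. -/
def FactorTuples {α : Type*} (n : ℕ) (L : Set (List α)) : Set (Fin n → List α) :=
  {w | ∃ u ∈ L, ∃ g : Fin (n + 1) → List α,
      u = (List.ofFn fun i : Fin n => g i.castSucc ++ w i).flatten ++ g (Fin.last n)}

/-- A language is bounded if `L ⊆ w1* ⋯ wn*` for some words `w1,…,wn`. -/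
def IsBoundedLang {α : Type*} (L : Set (List α)) : Prop :=
  ∃ (n : ℕ) (ws : Fin n → List α), L ⊆ LangConcFn fun i => LangStar {ws i}

/-- A language is regular if it is accepted by a finite (deterministic) automaton. -/
def IsRegularLang {α : Type*} (L : Set (List α)) : Prop :=
  ∃ (σ : Type) (_ : Fintype σ) (M : DFA α σ), ∀ w, w ∈ M.accepts ↔ w ∈ L

/-- `FireList T v ts v'` : firing the sequence `ts` of transitions (all from `T`)
leads from configuration `v` to `v'`, keeping all intermediate configurations
nonnegative (automatic, as configurations live in `Fin d → ℕ`). -/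
def FireList {d : ℕ} (T : Set (Fin d → ℤ)) :
    (Fin d → ℕ) → List (Fin d → ℤ) → (Fin d → ℕ) → Prop
  | v, [], v' => v = v'
  | v, τ :: ts, v' => τ ∈ T ∧ ∃ u : Fin d → ℕ,
      (∀ i, (u i : ℤ) = (v i : ℤ) + τ i) ∧ FireList T u ts v'

/-- A labeled vector addition system over the alphabet `α`. -/
structure LVAS (α : Type*) where
  d : ℕ
  T : Finset (Fin d → ℤ)
  s : Fin d → ℕ
  t : Fin d → ℕ
  /-- the labeling `h : T → Σ ∪ {ε}`, with `none` playing the role of `ε` -/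
  lab : (Fin d → ℤ) → Option α

/-- The language of a labeled VAS: labels of firing sequences from source to target. -/
def LVAS.lang {α : Type*} (V : LVAS α) : Set (List α) :=
  {w | ∃ ts : List (Fin V.d → ℤ), FireList (↑V.T) V.s ts V.t ∧ ts.filterMap V.lab = w}

/-- A VAS language is the language of some labeled VAS. -/
def IsVASLang {α : Type*} (L : Set (List α)) : Prop := ∃ V : LVAS α, L = V.lang

/-- Given a decomposition `n = ns 0 + ⋯ + ns (k-1)`, the index in `Fin n` of the
`i`-th position of the `j`-th block. -/
def blockIdx {k n : ℕ} (ns : Fin k → ℕ) (h : ∑ j, ns j = n) (j : Fin k)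
    (i : Fin (ns j)) : Fin n :=
  ⟨(∑ j' ∈ Finset.univ.filter (fun j' => j' < j), ns j') + (i : ℕ), by
    have hj : j ∉ Finset.univ.filter (fun j' => j' < j) := by simp
    have h1 : ∑ j' ∈ insert j (Finset.univ.filter (fun j' => j' < j)), ns j'
        ≤ ∑ j', ns j' := Finset.sum_le_sum_of_subset (Finset.subset_univ _)
    rw [Finset.sum_insert hj] at h1
    have h2 := i.isLt
    omega⟩

/-- The product set `F_{n1}(L1) × ⋯ × F_{nk}(Lk) ⊆ (Σ*)^n` for a decomposition
`n = n1 + ⋯ + nk`: those `n`-tuples whose `j`-th block belongs to `F_{nj}(Lj)`. -/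
def ProdFT {α : Type*} {k n : ℕ} (ns : Fin k → ℕ) (Ls : Fin k → Set (List α))
    (h : ∑ j, ns j = n) : Set (Fin n → List α) :=
  {w | ∀ j : Fin k,
    (fun i : Fin (ns j) => w (blockIdx ns h j i)) ∈ FactorTuples (ns j) (Ls j)}

/-- An `n`-dimensional unboundedness predicate. -/
def IsUnbPred {α : Type*} (n : ℕ) (p : Set (Fin n → List α) → Prop) : Prop :=
  (∀ S T : Set (Fin n → List α), p S → S ⊆ T → p T) ∧
  (∀ S T : Set (Fin n → List α), p (S ∪ T) → p S ∨ p T) ∧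
  (∀ (k : ℕ) (Ls : Fin k → Set (List α)), p (FactorTuples n (LangConcFn Ls)) →
     ∃ (ns : Fin k → ℕ) (h : ∑ j, ns j = n), p (ProdFT ns Ls h))

/-- Downward closure of a set of `n`-tuples of words w.r.t. the (scattered) subword
ordering in each component. -/
def dclT {α : Type*} {n : ℕ} (S : Set (Fin n → List α)) : Set (Fin n → List α) :=
  {u | ∃ v ∈ S, ∀ i, List.Sublist (u i) (v i)}

/-- `numF K w = |w|_K`, the largest `m` such that `m` non-overlapping factors from `K`
occur in `w` in order. -/
noncomputable def numF {α : Type*} (K : Set (List α)) (w : List α) : ℕ :=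
  sSup {m | ∃ ws : Fin m → List α, (∀ i, ws i ∈ K) ∧ ws ∈ FactorTuples m {w}}

/-- `cWrap c L = cLc = {cuc : u ∈ L}`. -/
def cWrap {α : Type*} (c : α) (L : Set (List α)) : Set (List α) :=
  {w | ∃ u ∈ L, w = c :: (u ++ [c])}

/-- `cSepStar c L = c(Lc)* = {c u1 c u2 c ⋯ um c : m ≥ 0, u1,…,um ∈ L}`. -/
def cSepStar {α : Type*} (c : α) (L : Set (List α)) : Set (List α) :=
  {w | ∃ us : List (List α), (∀ u ∈ us, u ∈ L) ∧
      w = c :: (us.map (fun u => u ++ [c])).flatten}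

/-- A subset of `ℕ^n` is recognizable if it is saturated by an additive monoid
morphism into a finite monoid. -/
def IsRecognizable {n : ℕ} (U : Set (Fin n → ℕ)) : Prop :=
  ∃ (M : Type) (_ : AddMonoid M) (_ : Finite M) (φ : (Fin n → ℕ) →+ M),
    U = φ ⁻¹' (φ '' U)

/-- `U ⊆ ℕ^n` is a section of a VAS reachability set. -/
def IsVASReachSection {n : ℕ} (U : Set (Fin n → ℕ)) : Prop :=
  ∃ (N : ℕ) (T : Finset (Fin N → ℤ)) (s : Fin N → ℕ) (I : Finset (Fin N))
    (x : Fin N → ℕ) (e : Fin n → Fin N),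
    StrictMono e ∧ (∀ j, e j ∉ I) ∧ (∀ i, i ∉ I → ∃ j, e j = i) ∧
    U = {u | ∃ v : Fin N → ℕ, (∃ ts, FireList (↑T) s ts v) ∧
          (∀ i ∈ I, v i = x i) ∧ (∀ j, v (e j) = u j)}

section Aux
variable {α : Type} {c : α}

/-- Matching at the first `c`. -/
lemma aux_lemA : ∀ {u v s t : List α}, c ∉ u → c ∉ v →
    u ++ c :: s = v ++ c :: t → u = v ∧ s = t := by
  intro u
  induction u with
  | nil =>
    intro v s t _ hv h
    cases v with
    | nil => simpa using h
    | cons b v' =>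
      simp at h
      exact absurd (h.1 ▸ (List.mem_cons_self : c ∈ c :: v')) hv
  | cons a u' ih =>
    intro v s t hu hv h
    cases v with
    | nil =>
      simp at h
      exact absurd (h.1 ▸ (List.mem_cons_self : c ∈ c :: u')) hu
    | cons b v' =>
      simp only [List.cons_append, List.cons.injEq] at h
      obtain ⟨hab, h2⟩ := h
      have := ih (fun hm => hu (List.mem_cons_of_mem _ hm))
        (fun hm => hv (List.mem_cons_of_mem _ hm)) h2
      exact ⟨by rw [hab, this.1], this.2⟩

lemma aux_first_occ : ∀ {x : List α}, c ∈ x → ∃ p q, x = p ++ c :: q ∧ c ∉ p := by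
  intro x
  induction x with
  | nil => simp
  | cons a x' ih =>
    intro h
    by_cases hac : a = c
    · exact ⟨[], x', by simp [hac], by simp⟩
    · have hx' : c ∈ x' := by
        rcases List.mem_cons.mp h with h | h
        · exact absurd h.symm hac
        · exact h
      obtain ⟨p, q, hpq, hp⟩ := ih hx'
      exact ⟨a :: p, q, by simp [hpq], by
        simp only [List.mem_cons, not_or]
        exact ⟨fun h => hac h.symm, hp⟩⟩

lemma aux_lemC : ∀ (us : List (List α)) {w y : List α}, (∀ u ∈ us, c ∉ u) → c ∉ w →
    (us.map (fun u => u ++ [c])).flatten = w ++ c :: y → w ∈ us := by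
  intro us
  induction us with
  | nil => intro w y _ _ h; simp at h
  | cons u rest ih =>
    intro w y hus hw h
    simp only [List.map_cons, List.flatten_cons, List.append_assoc, List.singleton_append] at h
    have := aux_lemA (hus u (List.mem_cons_self)) hw h
    exact this.1 ▸ List.mem_cons_self

lemma aux_lemB : ∀ (us : List (List α)) (x : List α) {w y : List α},
    (∀ u ∈ us, c ∉ u) → c ∉ w →
    (us.map (fun u => u ++ [c])).flatten = x ++ c :: (w ++ c :: y) → w ∈ us := by
  intro us
  induction us with
  | nil => intro x w y _ _ h; simp at h
  | cons u rest ih =>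
    intro x w y hus hw h
    simp only [List.map_cons, List.flatten_cons, List.append_assoc, List.singleton_append] at h
    by_cases hx : c ∈ x
    · obtain ⟨p, q, hpq, hp⟩ := aux_first_occ hx
      rw [hpq, List.append_assoc, List.cons_append] at h
      have h2 := aux_lemA (hus u (List.mem_cons_self)) hp h
      have := ih q (fun v hv => hus v (List.mem_cons_of_mem _ hv)) hw
        (by rw [h2.2])
      exact List.mem_cons_of_mem _ this
    · have h2 := aux_lemA (hus u (List.mem_cons_self)) hx h
      have := aux_lemC rest (fun v hv => hus v (List.mem_cons_of_mem _ hv)) hw h2.2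
      exact List.mem_cons_of_mem _ this

lemma aux_decomp (A : Set α) : ∀ (w : List α), (∀ x ∈ w, x ∈ insert c A) →
    ∃ us : List (List α), (∀ u ∈ us, ∀ x ∈ u, x ∈ A) ∧
      w ++ [c] = (us.map (fun u => u ++ [c])).flatten := by
  intro w
  induction w with
  | nil => exact fun _ => ⟨[[]], by simp⟩
  | cons a w' ih =>
    intro hw
    obtain ⟨us, hus, heq⟩ := ih (fun x hx => hw x (List.mem_cons_of_mem _ hx))
    rcases Set.mem_insert_iff.mp (hw a (List.mem_cons_self)) with hac | haA
    · refine ⟨[] :: us, ?_, ?_⟩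
      · intro u hu x hxu
        rcases List.mem_cons.mp hu with h | h
        · simp [h] at hxu
        · exact hus u h x hxu
      · simp only [List.map_cons, List.flatten_cons]
        rw [hac]; simpa using heq
    · cases us with
      | nil => simp at heq
      | cons u rest =>
        refine ⟨(a :: u) :: rest, ?_, ?_⟩
        · intro v hv x hxv
          rcases List.mem_cons.mp hv with h | h
          · subst h
            rcases List.mem_cons.mp hxv with h | h
            · exact h ▸ haA
            · exact hus u (List.mem_cons_self) x h
          · exact hus v (List.mem_cons_of_mem _ h) x hxv
        · simp only [List.map_cons, List.flatten_cons] at heq ⊢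
          simp only [List.cons_append, heq]

end Aux

/-- For `L ⊆ Σ*` and a fresh letter `c ∉ Σ`, with `L' = c(Lc)*`,
we have `(Σ ∪ {c})* ⊆ F(L')` iff `L = Σ*`. -/
theorem factor_universal_cSepStar_iff {α : Type} [Fintype α] (A : Set α) (c : α)
    (hc : c ∉ A) (L : Set (List α)) (hL : ∀ w ∈ L, ∀ x ∈ w, x ∈ A) :
    {w : List α | ∀ x ∈ w, x ∈ insert c A} ⊆ Factors (cSepStar c L) ↔
      L = {w : List α | ∀ x ∈ w, x ∈ A} := by
  constructor
  · intro h
    apply Set.Subset.antisymm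
    · intro w hwL x hx
      exact hL w hwL x hx
    · intro w hw
      have hwset : (c :: (w ++ [c])) ∈ {w : List α | ∀ x ∈ w, x ∈ insert c A} := by
        intro x hx
        rcases List.mem_cons.mp hx with h1 | h1
        · exact h1 ▸ Set.mem_insert _ _
        · rcases List.mem_append.mp h1 with h2 | h2
          · exact Set.mem_insert_of_mem _ (hw x h2)
          · simp at h2; exact h2 ▸ Set.mem_insert _ _
      obtain ⟨u, hu, x, y, hxy⟩ := h hwset
      obtain ⟨us, hus, huu⟩ := hu
      have husfree : ∀ v ∈ us, c ∉ v := fun v hv hcv => hc (hL v (hus v hv) c hcv)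
      have hwfree : c ∉ w := fun hcw => hc (hw c hcw)
      rw [huu] at hxy
      suffices hmem : w ∈ us from hus w hmem
      cases x with
      | nil =>
        simp only [List.nil_append, List.cons_append, List.append_assoc,
          List.singleton_append, List.cons.injEq] at hxy
        exact aux_lemC us husfree hwfree hxy.2
      | cons a x' =>
        simp only [List.cons_append, List.append_assoc, List.singleton_append,
          List.cons.injEq] at hxy
        exact aux_lemB us x' husfree hwfree (by rw [hxy.2])
  · intro hLeq w hw
    obtain ⟨us, hus, heq⟩ := aux_decomp A w hw
    refine ⟨c :: (w ++ [c]), ⟨us, ?_, ?_⟩, [c], [c], by simp⟩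
    · intro u hu
      rw [hLeq]
      exact hus u hu
    · rw [← heq]
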